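/- Let L be a nonzero Gaussian integer and s a Gaussian integer with 2·N(s) > N(L). Then s ∉ 𝓕(L), and consequently for any Gaussian integer x, the unique remainder of x modulo L lying in 𝓕(L) is different from s. (Hence an unauthorized coalition B with N(lcm(B)) < 2·N(s) never reconstructs the secret s by this procedure.) -/
import Mathlib


/-- The fundamental domain `𝓕(z)` of a Gaussian integer `z`:
the semi-open square `{ z(α + βi) : -1/2 < α ≤ 1/2, -1/2 < β ≤ 1/2 }` in `ℂ`. -/
def Fd (z : GaussianInt) : Set ℂ :=
  { w | ∃ α β : ℝ, w = (GaussianInt.toComplex z) * (α + β * Complex.I) ∧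
      -(1/2 : ℝ) < α ∧ α ≤ 1/2 ∧ -(1/2 : ℝ) < β ∧ β ≤ 1/2 }

/-- If `2 * N(s) > N(L)`, then `s ∉ 𝓕(L)`, and consequently the remainder lying in
`𝓕(L)` of any Gaussian integer `x` modulo `L` is different from `s`: an unauthorized
coalition never reconstructs the secret by this procedure. -/
theorem secret_not_recovered (L s : GaussianInt) (hL : L ≠ 0)
    (hs : L.norm < 2 * s.norm) :
    GaussianInt.toComplex s ∉ Fd L ∧
      ∀ x r : GaussianInt, GaussianInt.toComplex r ∈ Fd L → L ∣ x - r → r ≠ s := by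
  have key : GaussianInt.toComplex s ∉ Fd L := by
    rintro ⟨α, β, heq, hα1, hα2, hβ1, hβ2⟩
    have hnorm : Complex.normSq (GaussianInt.toComplex s)
        = Complex.normSq (GaussianInt.toComplex L) * (α ^ 2 + β ^ 2) := by
      rw [heq, Complex.normSq_mul]
      congr 1
      simp [Complex.normSq_apply]
      ring
    have habs : (α ^ 2 + β ^ 2 : ℝ) ≤ 1 / 2 := by
      nlinarith
    have hL' : (0:ℝ) < Complex.normSq (GaussianInt.toComplex L) := by
      rw [Complex.normSq_pos, Ne, GaussianInt.toComplex_eq_zero]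
      exact hL
    have h2 : 2 * Complex.normSq (GaussianInt.toComplex s)
        ≤ Complex.normSq (GaussianInt.toComplex L) := by
      rw [hnorm]; nlinarith
    rw [← GaussianInt.intCast_real_norm, ← GaussianInt.intCast_real_norm] at h2
    have : (L.norm : ℝ) < 2 * (s.norm : ℝ) := by exact_mod_cast hs
    linarith
  refine ⟨key, ?_⟩
  rintro x r hr _ rfl
  exact key hr
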